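/- If G is a 4-regular simple graph in which every edge lies in a triangle, and T = {xy, yz, zx} is an eligible triangle of G, then the graph G' obtained by Operation 1 — deleting the edges of T, adding three new vertices u, v, w forming a triangle, and adding edges ux, uy, vy, vz, wz, wx — is 4-regular and every edge of G' lies in a triangle. -/

import Mathlib

/-- If `G` is a quartic simple graph with the triangle property and
`T = {xy, yz, zx}` is an eligible triangle of `G`, then the graph `G'`
obtained by Operation 1 (delete the edges of `T`, add three new vertices
`u = 0`, `v = 1`, `w = 2` forming a triangle, together with edges
`ux, uy, vy, vz, wz, wx`) is 4-regular and has the triangle property. -/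
theorem operation1_preserves_triangle_property {V : Type*} (G : SimpleGraph V)
    (hreg : ∀ u : V, (G.neighborSet u).ncard = 4)
    (htri : ∀ u v : V, G.Adj u v → ∃ w : V, G.Adj u w ∧ G.Adj v w)
    (x y z : V) (hxy : G.Adj x y) (hyz : G.Adj y z) (hxz : G.Adj x z)
    (heligible : ∀ u v : V,
      (G.deleteEdges {s(x, y), s(y, z), s(x, z)}).Adj u v →
      ∃ w : V, (G.deleteEdges {s(x, y), s(y, z), s(x, z)}).Adj u w ∧
        (G.deleteEdges {s(x, y), s(y, z), s(x, z)}).Adj v w) :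
    let G' : SimpleGraph (V ⊕ Fin 3) :=
      SimpleGraph.fromRel (fun a b =>
        match a, b with
        | Sum.inl p, Sum.inl q =>
            G.Adj p q ∧ s(p, q) ∉ ({s(x, y), s(y, z), s(x, z)} : Set (Sym2 V))
        | Sum.inr i, Sum.inl p =>
            (i = 0 ∧ (p = x ∨ p = y)) ∨ (i = 1 ∧ (p = y ∨ p = z)) ∨
              (i = 2 ∧ (p = z ∨ p = x))
        | Sum.inl _, Sum.inr _ => False
        | Sum.inr _, Sum.inr _ => True)
    (∀ a : V ⊕ Fin 3, (G'.neighborSet a).ncard = 4) ∧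
      (∀ a b : V ⊕ Fin 3, G'.Adj a b → ∃ c : V ⊕ Fin 3, G'.Adj a c ∧ G'.Adj b c) := by
  intro G'
  have hxyne : x ≠ y := hxy.ne
  have hyzne : y ≠ z := hyz.ne
  have hxzne : x ≠ z := hxz.ne
  set T : Set (Sym2 V) := {s(x, y), s(y, z), s(x, z)} with hT
  -- adjacency characterizations
  have hLL : ∀ p q : V, G'.Adj (Sum.inl p) (Sum.inl q) ↔ (G.Adj p q ∧ s(p, q) ∉ T) := by
    intro p q
    constructor
    · rintro ⟨-, h | h⟩
      · exact h
      · exact ⟨h.1.symm, fun hm => h.2 (by rwa [Sym2.eq_swap] at hm)⟩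
    · intro h
      exact ⟨fun he => h.1.ne (Sum.inl.inj he), Or.inl h⟩
  have hRL : ∀ (i : Fin 3) (p : V), G'.Adj (Sum.inr i) (Sum.inl p) ↔
      ((i = 0 ∧ (p = x ∨ p = y)) ∨ (i = 1 ∧ (p = y ∨ p = z)) ∨ (i = 2 ∧ (p = z ∨ p = x))) := by
    intro i p
    constructor
    · rintro ⟨-, h | h⟩
      · exact h
      · exact h.elim
    · intro h
      exact ⟨fun he => by simp at he, Or.inl h⟩
  have hLR : ∀ (p : V) (i : Fin 3), G'.Adj (Sum.inl p) (Sum.inr i) ↔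
      ((i = 0 ∧ (p = x ∨ p = y)) ∨ (i = 1 ∧ (p = y ∨ p = z)) ∨ (i = 2 ∧ (p = z ∨ p = x))) :=
    fun p i => (G'.adj_comm _ _).trans (hRL i p)
  have hRR : ∀ i j : Fin 3, G'.Adj (Sum.inr i) (Sum.inr j) ↔ i ≠ j := by
    intro i j
    constructor
    · exact fun h he => h.ne (by rw [he])
    · exact fun h => ⟨fun he => h (Sum.inr.inj he), Or.inl trivial⟩
  have hmemT : ∀ p q : V, s(p, q) ∈ T ↔
      ((p = x ∧ q = y) ∨ (p = y ∧ q = x) ∨ (p = y ∧ q = z) ∨ (p = z ∧ q = y) ∨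
        (p = x ∧ q = z) ∨ (p = z ∧ q = x)) := by
    intro p q
    simp only [hT, Set.mem_insert_iff, Set.mem_singleton_iff, Sym2.eq_iff]
    tauto
  -- finiteness of neighbor sets
  have hfin : ∀ p : V, (G.neighborSet p).Finite := by
    intro p
    by_contra h
    have h2 := Set.Infinite.ncard (s := G.neighborSet p) h
    rw [hreg p] at h2
    omega
  have hcard_ul : ∀ (S : Set V), S.Finite → ∀ (I : Set (Fin 3)),
      (Sum.inl '' S ∪ Sum.inr '' I : Set (V ⊕ Fin 3)).ncard = S.ncard + I.ncard := by
    intro S hS I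
    rw [Set.ncard_union_eq ?_ (hS.image _) ((Set.toFinite I).image _),
      Set.ncard_image_of_injective _ Sum.inl_injective,
      Set.ncard_image_of_injective _ Sum.inr_injective]
    rw [Set.disjoint_left]
    rintro a ⟨p, -, rfl⟩ ⟨q, -, h⟩
    exact absurd h (by simp)
  -- generic degree computation for old vertices that lie on the triangle
  have key : ∀ (p a b : V) (i1 i2 : Fin 3), G.Adj p a → G.Adj p b → a ≠ b → i1 ≠ i2 →
      (∀ q, G'.Adj (Sum.inl p) (Sum.inl q) ↔ (G.Adj p q ∧ q ≠ a ∧ q ≠ b)) →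
      (∀ i, G'.Adj (Sum.inl p) (Sum.inr i) ↔ (i = i1 ∨ i = i2)) →
      (G'.neighborSet (Sum.inl p)).ncard = 4 := by
    intro p a b i1 i2 hpa hpb hab h12 hAdjL hAdjR
    have hns : G'.neighborSet (Sum.inl p) =
        Sum.inl '' (G.neighborSet p \ {a, b}) ∪ Sum.inr '' {i1, i2} := by
      ext c
      rcases c with q | i
      · simp only [SimpleGraph.mem_neighborSet, hAdjL, Set.mem_union, Set.mem_image,
          Set.mem_diff, Set.mem_insert_iff, Set.mem_singleton_iff, not_or]
        constructor
        · rintro ⟨h1, h2, h3⟩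
          exact Or.inl ⟨q, ⟨h1, h2, h3⟩, rfl⟩
        · rintro (⟨q', ⟨h1, h2, h3⟩, he⟩ | ⟨k, -, he⟩)
          · obtain rfl := Sum.inl.inj he
            exact ⟨h1, h2, h3⟩
          · exact absurd he (by simp)
      · simp only [SimpleGraph.mem_neighborSet, hAdjR, Set.mem_union, Set.mem_image,
          Set.mem_insert_iff, Set.mem_singleton_iff]
        constructor
        · rintro (h | h)
          · exact Or.inr ⟨i, Or.inl h, rfl⟩
          · exact Or.inr ⟨i, Or.inr h, rfl⟩
        · rintro (⟨q, -, he⟩ | ⟨k, hk, he⟩)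
          · exact absurd he (by simp)
          · obtain rfl := Sum.inr.inj he
            rcases hk with rfl | rfl
            · exact Or.inl rfl
            · exact Or.inr rfl
    rw [hns, hcard_ul _ (hfin p).diff,
      Set.ncard_diff (by rintro c (rfl | rfl); exacts [hpa, hpb]) (Set.toFinite _),
      hreg p, Set.ncard_pair hab, Set.ncard_pair h12]
  constructor
  · -- regularity
    rintro (p | i)
    · -- vertex inl p
      by_cases hpx : p = x
      · subst hpx
        refine key p y z 0 2 hxy hxz hyzne (by decide) ?_ ?_
        · intro q
          rw [hLL]
          constructor
          · rintro ⟨h1, hm⟩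
            refine ⟨h1, ?_, ?_⟩ <;> rintro rfl <;> exact hm (by simp [hT])
          · rintro ⟨h1, h2, h3⟩
            refine ⟨h1, fun hm => ?_⟩
            have := (hmemT _ _).mp hm
            tauto
        · intro i
          rw [hLR]
          constructor
          · rintro (⟨rfl, -⟩ | ⟨rfl, h | h⟩ | ⟨rfl, -⟩)
            · exact Or.inl rfl
            · exact absurd h hxyne
            · exact absurd h hxzne
            · exact Or.inr rfl
          · rintro (rfl | rfl)
            · exact Or.inl ⟨rfl, Or.inl rfl⟩
            · exact Or.inr (Or.inr ⟨rfl, Or.inr rfl⟩)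
      · by_cases hpy : p = y
        · subst hpy
          refine key p x z 0 1 hxy.symm hyz hxzne (by decide) ?_ ?_
          · intro q
            rw [hLL]
            constructor
            · rintro ⟨h1, hm⟩
              refine ⟨h1, ?_, ?_⟩ <;> rintro rfl <;> exact hm (by simp [hT])
            · rintro ⟨h1, h2, h3⟩
              refine ⟨h1, fun hm => ?_⟩
              have := (hmemT _ _).mp hm
              tauto
          · intro i
            rw [hLR]
            constructor
            · rintro (⟨rfl, -⟩ | ⟨rfl, -⟩ | ⟨rfl, h | h⟩)
              · exact Or.inl rfl
              · exact Or.inr rfl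
              · exact absurd h hyzne
              · exact absurd h.symm hxyne
            · rintro (rfl | rfl)
              · exact Or.inl ⟨rfl, Or.inr rfl⟩
              · exact Or.inr (Or.inl ⟨rfl, Or.inl rfl⟩)
        · by_cases hpz : p = z
          · subst hpz
            refine key p x y 1 2 hxz.symm hyz.symm hxyne (by decide) ?_ ?_
            · intro q
              rw [hLL]
              constructor
              · rintro ⟨h1, hm⟩
                refine ⟨h1, ?_, ?_⟩ <;> rintro rfl <;> exact hm (by simp [hT])
              · rintro ⟨h1, h2, h3⟩
                refine ⟨h1, fun hm => ?_⟩
                have := (hmemT _ _).mp hm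
                tauto
            · intro i
              rw [hLR]
              constructor
              · rintro (⟨rfl, h | h⟩ | ⟨rfl, -⟩ | ⟨rfl, -⟩)
                · exact absurd h.symm hxzne
                · exact absurd h.symm hyzne
                · exact Or.inl rfl
                · exact Or.inr rfl
              · rintro (rfl | rfl)
                · exact Or.inr (Or.inl ⟨rfl, Or.inr rfl⟩)
                · exact Or.inr (Or.inr ⟨rfl, Or.inl rfl⟩)
          · -- p not on the triangle
            have hns : G'.neighborSet (Sum.inl p) =
                Sum.inl '' G.neighborSet p ∪ Sum.inr '' (∅ : Set (Fin 3)) := by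
              ext c
              rcases c with q | i
              · simp only [SimpleGraph.mem_neighborSet, hLL, Set.mem_union, Set.mem_image,
                  Set.image_empty, Set.mem_empty_iff_false, or_false]
                constructor
                · rintro ⟨h1, -⟩
                  exact ⟨q, h1, rfl⟩
                · rintro ⟨q', h1, he⟩
                  obtain rfl := Sum.inl.inj he
                  refine ⟨h1, fun hm => ?_⟩
                  have := (hmemT _ _).mp hm
                  tauto
              · simp only [SimpleGraph.mem_neighborSet, hLR, Set.mem_union, Set.mem_image,
                  Set.image_empty, Set.mem_empty_iff_false, or_false]
                constructor
                · rintro (⟨-, h⟩ | ⟨-, h⟩ | ⟨-, h⟩) <;> tauto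
                · rintro ⟨q, -, he⟩
                  exact absurd he (by simp)
            rw [hns, hcard_ul _ (hfin p), hreg p, Set.ncard_empty]
    · -- vertex inr i : explicit neighbor sets
      have hns3 : ∀ (i : Fin 3) (a1 a2 : V), a1 ≠ a2 →
          (∀ q : V, (G'.Adj (Sum.inr i) (Sum.inl q)) ↔ (q = a1 ∨ q = a2)) →
          (G'.neighborSet (Sum.inr i)).ncard = 4 := by
        intro i a1 a2 h12 hAdj
        have hns : G'.neighborSet (Sum.inr i) =
            Sum.inl '' {a1, a2} ∪ Sum.inr '' {j | j ≠ i} := by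
          ext c
          rcases c with q | j
          · simp only [SimpleGraph.mem_neighborSet, hAdj, Set.mem_union, Set.mem_image,
              Set.mem_insert_iff, Set.mem_singleton_iff, Set.mem_setOf_eq]
            constructor
            · rintro (h | h)
              · exact Or.inl ⟨q, Or.inl h, rfl⟩
              · exact Or.inl ⟨q, Or.inr h, rfl⟩
            · rintro (⟨q', hq', he⟩ | ⟨k, -, he⟩)
              · obtain rfl := Sum.inl.inj he
                exact hq'
              · exact absurd he (by simp)
          · simp only [SimpleGraph.mem_neighborSet, hRR, Set.mem_union, Set.mem_image,
              Set.mem_insert_iff, Set.mem_singleton_iff, Set.mem_setOf_eq]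
            constructor
            · intro h
              exact Or.inr ⟨j, fun he => h he.symm, rfl⟩
            · rintro (⟨q', -, he⟩ | ⟨k, hk, he⟩)
              · exact absurd he (by simp)
              · obtain rfl := Sum.inr.inj he
                exact fun he => hk he.symm
        have hd : ∀ i j : Fin 3, j ≠ i ↔ (j = i + 1 ∨ j = i + 2) := by decide
        have hd2 : ∀ i : Fin 3, i + 1 ≠ i + 2 := by decide
        have hcompl : ({j | j ≠ i} : Set (Fin 3)).ncard = 2 := by
          have he : ({j | j ≠ i} : Set (Fin 3)) = ({i + 1, i + 2} : Set (Fin 3)) := by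
            ext j
            simp only [Set.mem_setOf_eq, Set.mem_insert_iff, Set.mem_singleton_iff]
            exact hd i j
          rw [he]
          exact Set.ncard_pair (hd2 i)
        rw [hns, hcard_ul _ (Set.toFinite _), Set.ncard_pair h12, hcompl]
      fin_cases i
      · refine hns3 0 x y hxyne fun q => ?_
        rw [hRL]
        constructor
        · rintro (⟨-, h⟩ | ⟨h, -⟩ | ⟨h, -⟩)
          · exact h
          · exact absurd h (by decide)
          · exact absurd h (by decide)
        · intro h
          exact Or.inl ⟨rfl, h⟩
      · refine hns3 1 y z hyzne fun q => ?_
        rw [hRL]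
        constructor
        · rintro (⟨h, -⟩ | ⟨-, h⟩ | ⟨h, -⟩)
          · exact absurd h (by decide)
          · exact h
          · exact absurd h (by decide)
        · intro h
          exact Or.inr (Or.inl ⟨rfl, h⟩)
      · refine hns3 2 z x (Ne.symm hxzne) fun q => ?_
        rw [hRL]
        constructor
        · rintro (⟨h, -⟩ | ⟨h, -⟩ | ⟨-, h⟩)
          · exact absurd h (by decide)
          · exact absurd h (by decide)
          · exact h
        · intro h
          exact Or.inr (Or.inr ⟨rfl, h⟩)
  · -- triangle property
    rintro (p | i) (q | j) hadj
    · obtain ⟨hG, hm⟩ := (hLL p q).mp hadj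
      obtain ⟨c, hc1, hc2⟩ := heligible p q (by rw [SimpleGraph.deleteEdges_adj]; exact ⟨hG, hm⟩)
      rw [SimpleGraph.deleteEdges_adj] at hc1 hc2
      exact ⟨Sum.inl c, (hLL p c).mpr hc1, (hLL q c).mpr hc2⟩
    · -- inl p, inr j
      rcases (hLR p j).mp hadj with ⟨rfl, h⟩ | ⟨rfl, h⟩ | ⟨rfl, h⟩
      · rcases h with rfl | rfl
        · exact ⟨Sum.inr 2, (hLR _ _).mpr (Or.inr (Or.inr ⟨rfl, Or.inr rfl⟩)),
            (hRR _ _).mpr (by decide)⟩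
        · exact ⟨Sum.inr 1, (hLR _ _).mpr (Or.inr (Or.inl ⟨rfl, Or.inl rfl⟩)),
            (hRR _ _).mpr (by decide)⟩
      · rcases h with rfl | rfl
        · exact ⟨Sum.inr 0, (hLR _ _).mpr (Or.inl ⟨rfl, Or.inr rfl⟩),
            (hRR _ _).mpr (by decide)⟩
        · exact ⟨Sum.inr 2, (hLR _ _).mpr (Or.inr (Or.inr ⟨rfl, Or.inl rfl⟩)),
            (hRR _ _).mpr (by decide)⟩
      · rcases h with rfl | rfl
        · exact ⟨Sum.inr 1, (hLR _ _).mpr (Or.inr (Or.inl ⟨rfl, Or.inr rfl⟩)),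
            (hRR _ _).mpr (by decide)⟩
        · exact ⟨Sum.inr 0, (hLR _ _).mpr (Or.inl ⟨rfl, Or.inl rfl⟩),
            (hRR _ _).mpr (by decide)⟩
    · -- inr i, inl q
      rcases (hRL i q).mp hadj with ⟨rfl, h⟩ | ⟨rfl, h⟩ | ⟨rfl, h⟩
      · rcases h with rfl | rfl
        · exact ⟨Sum.inr 2, (hRR _ _).mpr (by decide),
            (hLR _ _).mpr (Or.inr (Or.inr ⟨rfl, Or.inr rfl⟩))⟩
        · exact ⟨Sum.inr 1, (hRR _ _).mpr (by decide),
            (hLR _ _).mpr (Or.inr (Or.inl ⟨rfl, Or.inl rfl⟩))⟩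
      · rcases h with rfl | rfl
        · exact ⟨Sum.inr 0, (hRR _ _).mpr (by decide),
            (hLR _ _).mpr (Or.inl ⟨rfl, Or.inr rfl⟩)⟩
        · exact ⟨Sum.inr 2, (hRR _ _).mpr (by decide),
            (hLR _ _).mpr (Or.inr (Or.inr ⟨rfl, Or.inl rfl⟩))⟩
      · rcases h with rfl | rfl
        · exact ⟨Sum.inr 1, (hRR _ _).mpr (by decide),
            (hLR _ _).mpr (Or.inr (Or.inl ⟨rfl, Or.inr rfl⟩))⟩
        · exact ⟨Sum.inr 0, (hRR _ _).mpr (by decide),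
            (hLR _ _).mpr (Or.inl ⟨rfl, Or.inl rfl⟩)⟩
    · -- inr i, inr j
      have hij := (hRR i j).mp hadj
      have hk : ∀ i j : Fin 3, i ≠ j → ∃ k : Fin 3, k ≠ i ∧ k ≠ j := by decide
      obtain ⟨k, hki, hkj⟩ := hk i j hij
      exact ⟨Sum.inr k, (hRR _ _).mpr hki.symm, (hRR _ _).mpr hkj.symm⟩
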